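/- Let N ≥ 1, s ∈ (1/2,1), and let u(x) = g(|x|) where g satisfies the radial profile hypothesis (H1). Then for every x ∈ ℝ^N with x ≠ 0 and every unit vector ξ ∈ ℝ^N one has 𝓘_{x^⊥} u(x) ≤ 𝓘_ξ u(x) ≤ 𝓘_{x̂} u(x), where x̂ = x/|x| and x^⊥ is any unit vector orthogonal to x. Consequently 𝓘_1^+ u(x) = 𝓘_{x̂} u(x) and 𝓘_1^- u(x) = 𝓘_{x^⊥} u(x). -/

import Mathlib

open MeasureTheory Real Set

noncomputable section

abbrev E (N : ℕ) := EuclideanSpace ℝ (Fin N)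

/-- The one-dimensional directional fractional operator `𝓘_ξ u(x)`. -/
noncomputable def Iop (N : ℕ) (s Cs : ℝ) (u : E N → ℝ) (ξ x : E N) : ℝ :=
  Cs * ∫ τ in Ioi (0:ℝ), (u (x + τ • ξ) + u (x - τ • ξ) - 2 * u x) * τ ^ (-(1 + 2*s))

/-- `𝓘_k^+ u(x)`: supremum over orthonormal `k`-frames. -/
noncomputable def IkPlus (N k : ℕ) (s Cs : ℝ) (u : E N → ℝ) (x : E N) : ℝ :=
  ⨆ ξ : {ξ : Fin k → E N // Orthonormal ℝ ξ}, ∑ i, Iop N s Cs u (ξ.1 i) x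

/-- `𝓘_k^- u(x)`: infimum over orthonormal `k`-frames. -/
noncomputable def IkMinus (N k : ℕ) (s Cs : ℝ) (u : E N → ℝ) (x : E N) : ℝ :=
  ⨅ ξ : {ξ : Fin k → E N // Orthonormal ℝ ξ}, ∑ i, Iop N s Cs u (ξ.1 i) x

def gtilde (g : ℝ → ℝ) : ℝ → ℝ := fun t => g (Real.sqrt t)

/-- `g ∈ L¹_σ(ρ,∞)`. -/
def MemL1w (σ ρ : ℝ) (g : ℝ → ℝ) : Prop :=
  IntegrableOn (fun τ => g τ / (1 + τ ^ (1 + σ))) (Ioi ρ)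

/-- The radial profile hypothesis (H1). -/
def HypH1 (s : ℝ) (g : ℝ → ℝ) : Prop :=
  ContDiffOn ℝ 2 g (Ioi 0) ∧ MemL1w (2*s) 0 g ∧
  MonotoneOn (deriv (gtilde g)) (Ioi 0) ∧
  ∃ ρ > 0, MemL1w (s - 1/2) ρ (deriv (gtilde g))

/-- Lipschitz bound for a C¹ function on a compact subinterval of (0,∞). -/
lemma aux_lip {f : ℝ → ℝ} (hf : ContDiffOn ℝ 1 f (Ioi 0)) {α β : ℝ} (hα : 0 < α) :
    ∃ M : ℝ, 0 ≤ M ∧ ∀ p ∈ Icc α β, ∀ q ∈ Icc α β, |f p - f q| ≤ M * |p - q| := by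
  have hsub : Icc α β ⊆ Ioi (0:ℝ) := fun t ht => lt_of_lt_of_le hα ht.1
  obtain ⟨C, hC⟩ := (isCompact_Icc (a := α) (b := β)).exists_bound_of_continuousOn
    ((hf.continuousOn_deriv_of_isOpen isOpen_Ioi le_rfl).mono hsub)
  refine ⟨max C 0, le_max_right _ _, fun p hp q hq => ?_⟩
  have hder : ∀ t ∈ Icc α β, DifferentiableAt ℝ f t := fun t ht =>
    (hf.differentiableOn one_ne_zero).differentiableAt (isOpen_Ioi.mem_nhds (hsub ht))
  have := Convex.norm_image_sub_le_of_norm_deriv_le (C := max C 0) hder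
    (fun t ht => le_trans (hC t ht) (le_max_left _ _)) (convex_Icc α β) hq hp
  simpa [Real.norm_eq_abs] using this

/-- Second-order bound for the symmetric second difference of a C² function. -/
lemma aux_second {f : ℝ → ℝ} (hf : ContDiffOn ℝ 2 f (Ioi 0)) {r : ℝ} (hr : 0 < r) :
    ∃ C : ℝ, 0 ≤ C ∧ ∀ τ ∈ Icc (0:ℝ) (r/2), |f (r+τ) + f (r-τ) - 2 * f r| ≤ C * τ^2 := by
  have hf' : ContDiffOn ℝ 1 (deriv f) (Ioi 0) :=
    hf.deriv_of_isOpen isOpen_Ioi (by norm_num)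
  obtain ⟨L, hL0, hL⟩ := aux_lip hf' (α := r/2) (β := 3*r/2) (by positivity)
  refine ⟨2*L, by positivity, fun τ hτ => ?_⟩
  obtain ⟨hτ0, hτr⟩ := hτ
  set h : ℝ → ℝ := fun σ => f (r+σ) + f (r-σ) - 2 * f r with hh
  have hmem : ∀ σ ∈ Icc (0:ℝ) τ, (r+σ ∈ Icc (r/2) (3*r/2)) ∧ (r-σ ∈ Icc (r/2) (3*r/2)) := by
    intro σ hσ
    constructor <;> constructor <;> nlinarith [hσ.1, hσ.2]
  have hda : ∀ t ∈ Ioi (0:ℝ), DifferentiableAt ℝ f t := fun t ht =>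
    (hf.differentiableOn (by norm_num)).differentiableAt (isOpen_Ioi.mem_nhds ht)
  have key : ∀ σ ∈ Icc (0:ℝ) τ,
      HasDerivWithinAt h (deriv f (r+σ) - deriv f (r-σ)) (Icc 0 τ) σ := by
    intro σ hσ
    have h1 : (0:ℝ) < r + σ := by nlinarith [hσ.1, hσ.2]
    have h2 : (0:ℝ) < r - σ := by nlinarith [hσ.1, hσ.2]
    have d1 : HasDerivAt (fun σ : ℝ => f (r+σ)) (deriv f (r+σ) * 1) σ :=
      (hda _ h1).hasDerivAt.comp σ ((hasDerivAt_id σ).const_add r)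
    have d2 : HasDerivAt (fun σ : ℝ => f (r-σ)) (deriv f (r-σ) * (-1)) σ :=
      (hda _ h2).hasDerivAt.comp σ ((hasDerivAt_id σ).const_sub r)
    have := ((d1.add d2).sub_const (2 * f r))
    have heq : deriv f (r+σ) * 1 + deriv f (r-σ) * (-1)
        = deriv f (r+σ) - deriv f (r-σ) := by ring
    rw [heq] at this
    exact this.hasDerivWithinAt
  have bound : ∀ σ ∈ Icc (0:ℝ) τ, ‖deriv f (r+σ) - deriv f (r-σ)‖ ≤ 2*L*τ := by
    intro σ hσ
    obtain ⟨m1, m2⟩ := hmem σ hσ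
    have := hL _ m1 _ m2
    have habs : |(r+σ) - (r-σ)| = 2*σ := by
      rw [show (r+σ) - (r-σ) = 2*σ by ring, abs_of_nonneg (by linarith [hσ.1])]
    rw [habs] at this
    calc ‖deriv f (r+σ) - deriv f (r-σ)‖ ≤ L * (2*σ) := by
          simpa [Real.norm_eq_abs] using this
      _ ≤ 2*L*τ := by nlinarith [hσ.2]
  have := Convex.norm_image_sub_le_of_norm_hasDerivWithin_le
    key bound (convex_Icc 0 τ) (left_mem_Icc.mpr hτ0) (right_mem_Icc.mpr hτ0)
  have hh0 : h 0 = 0 := by simp [hh]; ring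
  rw [hh0, sub_zero] at this
  calc |f (r+τ) + f (r-τ) - 2 * f r| = ‖h τ‖ := by simp [hh, Real.norm_eq_abs]
    _ ≤ 2*L*τ * ‖τ - 0‖ := this
    _ = 2*L * τ^2 := by rw [sub_zero, Real.norm_eq_abs, abs_of_nonneg hτ0]; ring

/-- Change of variables for integrability. -/
lemma aux_cv {φ φ' F : ℝ → ℝ} {S : Set ℝ} (hS : MeasurableSet S)
    (hd : ∀ τ ∈ S, HasDerivWithinAt φ (φ' τ) S τ) (hinj : InjOn φ S)
    (hF : IntegrableOn F (φ '' S)) : IntegrableOn (fun τ => |φ' τ| * F (φ τ)) S := by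
  simpa [smul_eq_mul] using
    (integrableOn_image_iff_integrableOn_abs_deriv_smul hS hd hinj F).mp hF

/-- Domination on a set. -/
lemma aux_mono {ψ target : ℝ → ℝ} {S : Set ℝ} (hS : MeasurableSet S)
    (hψ : IntegrableOn ψ S) (hm : AEStronglyMeasurable target (volume.restrict S))
    (hb : ∀ τ ∈ S, |target τ| ≤ ψ τ) : IntegrableOn target S :=
  Integrable.mono' hψ hm ((ae_restrict_iff' hS).mpr (ae_of_all _ (by
    simpa [Real.norm_eq_abs] using hb)))

/-- Convexity pairing inequality. -/
lemma aux_convex_pair {G : ℝ → ℝ} (hG : ConvexOn ℝ (Ioi 0) G) {c h₁ h₂ : ℝ}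
    (h0 : 0 ≤ h₁) (h12 : h₁ ≤ h₂) (hq : 0 < c - h₂) :
    G (c + h₁) + G (c - h₁) ≤ G (c + h₂) + G (c - h₂) := by
  rcases eq_or_lt_of_le (h0.trans h12) with h20 | h2pos
  · have h10 : h₁ = 0 := le_antisymm (h12.trans h20.symm.le) h0
    rw [← h20, h10]
  · set lam := (h₂ + h₁) / (2 * h₂) with hlam
    set mu := (h₂ - h₁) / (2 * h₂) with hmu
    have hlam0 : 0 ≤ lam := by positivity
    have hmu0 : 0 ≤ mu := by
      apply div_nonneg (by linarith) (by linarith)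
    have hsum : lam + mu = 1 := by rw [hlam, hmu, ← add_div, div_eq_one_iff_eq (by positivity)]; ring
    have hp : c + h₂ ∈ Ioi (0:ℝ) := by simp only [mem_Ioi]; linarith
    have hqm : c - h₂ ∈ Ioi (0:ℝ) := by simpa using hq
    have e1 : lam • (c + h₂) + mu • (c - h₂) = c + h₁ := by
      simp only [smul_eq_mul, hlam, hmu]; field_simp; ring
    have e2 : mu • (c + h₂) + lam • (c - h₂) = c - h₁ := by
      simp only [smul_eq_mul, hlam, hmu]; field_simp; ring
    have A := hG.2 hp hqm hlam0 hmu0 hsum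
    have B := hG.2 hp hqm hmu0 hlam0 (by linarith)
    rw [e1] at A
    rw [e2] at B
    simp only [smul_eq_mul] at A B
    have : lam * G (c + h₂) + mu * G (c - h₂) + (mu * G (c + h₂) + lam * G (c - h₂))
        = G (c + h₂) + G (c - h₂) := by
      linear_combination (G (c + h₂) + G (c - h₂)) * hsum
    linarith

/-- Weight bound for tails: if `T < τ` and `y ≤ A * τ` then
`τ^(-c) * (1 + y^c) ≤ T^(-c) + A^c`. -/
lemma aux_w {c : ℝ} (hc : 0 < c) {T τ : ℝ} (hT : 0 < T) (hτ : T < τ) {y : ℝ} (hy : 0 ≤ y)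
    {A : ℝ} (hA0 : 0 ≤ A) (hA : y ≤ A * τ) :
    τ ^ (-c) * (1 + y ^ c) ≤ T ^ (-c) + A ^ c := by
  have hτ0 : (0:ℝ) < τ := hT.trans hτ
  have h1 : τ ^ (-c) ≤ T ^ (-c) :=
    Real.rpow_le_rpow_of_nonpos hT hτ.le (by linarith)
  have h2 : y ^ c ≤ A ^ c * τ ^ c := by
    calc y ^ c ≤ (A * τ) ^ c := Real.rpow_le_rpow hy hA hc.le
      _ = A ^ c * τ ^ c := Real.mul_rpow hA0 hτ0.le
  have h3 : τ ^ (-c) * τ ^ c = 1 := by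
    rw [← Real.rpow_add hτ0]; simp
  have h4 : τ ^ (-c) * y ^ c ≤ A ^ c := by
    calc τ ^ (-c) * y ^ c ≤ τ ^ (-c) * (A ^ c * τ ^ c) := by
          apply mul_le_mul_of_nonneg_left h2 (Real.rpow_nonneg hτ0.le _)
      _ = A ^ c * (τ ^ (-c) * τ ^ c) := by ring
      _ = A ^ c := by rw [h3, mul_one]
  have h5 : 0 ≤ τ ^ (-c) := Real.rpow_nonneg hτ0.le _
  nlinarith

/-- The radial pairing kernel. -/
def Kf (g : ℝ → ℝ) (r a τ : ℝ) : ℝ :=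
  gtilde g (r^2+τ^2+2*τ*a) + gtilde g (r^2+τ^2-2*τ*a) - 2 * gtilde g (r^2)

/-- The weight. -/
def Wf (s τ : ℝ) : ℝ := τ ^ (-(1+2*s))

lemma Kf_neg (g : ℝ → ℝ) (r a τ : ℝ) : Kf g r (-a) τ = Kf g r a τ := by
  unfold Kf
  rw [show r^2+τ^2+2*τ*(-a) = r^2+τ^2-2*τ*a from by ring,
    show r^2+τ^2-2*τ*(-a) = r^2+τ^2+2*τ*a from by ring]
  ring

lemma Kf_abs (g : ℝ → ℝ) (r a τ : ℝ) : Kf g r |a| τ = Kf g r a τ := by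
  rcases abs_cases a with ⟨h, _⟩ | ⟨h, _⟩
  · rw [h]
  · rw [h, Kf_neg]

section Core

variable {s : ℝ} (hs : s ∈ Ioo (1/2:ℝ) 1) {g : ℝ → ℝ}
  (hg1 : ContDiffOn ℝ 2 g (Ioi 0))
  (hg2 : IntegrableOn (fun τ => g τ / (1 + τ ^ (1+2*s))) (Ioi 0))
  (hg3 : MonotoneOn (deriv (gtilde g)) (Ioi 0))
  {r : ℝ} (hr : 0 < r)

include hg1 in
lemma hGC2 : ContDiffOn ℝ 2 (gtilde g) (Ioi 0) := by
  have hsqrt : ContDiffOn ℝ 2 Real.sqrt (Ioi 0) := fun t ht =>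
    (Real.contDiffAt_sqrt (ne_of_gt ht)).contDiffWithinAt
  exact hg1.comp hsqrt (fun t ht => mem_Ioi.mpr (Real.sqrt_pos.mpr ht))

include hg1 hg3 in
lemma hGconv : ConvexOn ℝ (Ioi 0) (gtilde g) := by
  apply MonotoneOn.convexOn_of_deriv (convex_Ioi 0) (hGC2 hg1).continuousOn
  · rw [interior_Ioi]; exact (hGC2 hg1).differentiableOn (by norm_num)
  · rw [interior_Ioi]; exact hg3

include hg1 hg3 hr in
/-- Monotonicity of `Kf` in the parameter `a`. -/
lemma Kf_mono {a b τ : ℝ} (ha : 0 ≤ a) (hab : a ≤ b) (hbr : b ≤ r)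
    (hτ : 0 < τ) (hne : τ ≠ r) : Kf g r a τ ≤ Kf g r b τ := by
  have hq : 0 < r^2+τ^2 - 2*τ*b := by
    have h0 : (r - τ)^2 ≠ 0 := pow_ne_zero 2 (sub_ne_zero.mpr (Ne.symm hne))
    have h1 : 0 < (r - τ)^2 := (sq_nonneg _).lt_of_ne (Ne.symm h0)
    nlinarith
  unfold Kf
  have h0 : 0 ≤ 2*τ*a := by nlinarith
  have h12 : 2*τ*a ≤ 2*τ*b := by nlinarith
  have := aux_convex_pair (hGconv hg1 hg3) (c := r^2+τ^2) h0 h12 hq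
  linarith

lemma Wf_cont : ContinuousOn (Wf s) (Ioi 0) := fun τ hτ =>
  (Real.continuousAt_rpow_const τ _ (Or.inl (ne_of_gt hτ))).continuousWithinAt

lemma Wf_pos {τ : ℝ} (hτ : 0 < τ) : 0 < Wf s τ := Real.rpow_pos_of_pos hτ _

include hg1 hr in
lemma Kf_cont {a : ℝ} (har : |a| ≤ r) :
    ContinuousOn (fun τ => Kf g r a τ) (Ioi 0 \ {r}) := by
  have hGcont : ContinuousOn (gtilde g) (Ioi 0) := (hGC2 hg1).continuousOn
  have harg : ∀ (ε : ℝ), |ε| ≤ 1 → ∀ τ ∈ Ioi 0 \ {r}, r^2+τ^2+2*τ*(ε*a) ∈ Ioi (0:ℝ) := by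
    intro ε hε τ hτ
    obtain ⟨hτ0, hτr⟩ := hτ
    rw [mem_Ioi] at hτ0 ⊢
    have h0 : (r - τ)^2 ≠ 0 := pow_ne_zero 2 (sub_ne_zero.mpr fun h => hτr (by simp [h.symm]))
    have h1 : 0 < (r - τ)^2 := (sq_nonneg _).lt_of_ne (Ne.symm h0)
    have h2 : |ε * a| ≤ r := by
      rw [abs_mul]
      calc |ε| * |a| ≤ 1 * r := mul_le_mul hε har (abs_nonneg a) zero_le_one
        _ = r := one_mul r
    have h3 := neg_abs_le (ε * a)
    have h4 := le_abs_self (ε * a)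
    nlinarith
  have c1 : ContinuousOn (fun τ => gtilde g (r^2+τ^2+2*τ*a)) (Ioi 0 \ {r}) := by
    apply hGcont.comp (by fun_prop)
    intro τ hτ
    have := harg 1 (by norm_num) τ hτ
    simpa using this
  have c2 : ContinuousOn (fun τ => gtilde g (r^2+τ^2-2*τ*a)) (Ioi 0 \ {r}) := by
    apply hGcont.comp (by fun_prop)
    intro τ hτ
    have := harg (-1) (by norm_num) τ hτ
    rw [show r^2+τ^2+2*τ*(-1*a) = r^2+τ^2-2*τ*a from by ring] at this
    exact this
  exact (c1.add c2).sub continuousOn_const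

include hg1 hr in
lemma Kf_aesm {a : ℝ} (har : |a| ≤ r) :
    AEStronglyMeasurable (fun τ => Kf g r a τ * Wf s τ) (volume.restrict (Ioi 0)) := by
  have hset : (Ioi (0:ℝ) \ {r} : Set ℝ) =ᵐ[volume] Ioi (0:ℝ) :=
    diff_ae_eq_self.mpr (measure_mono_null inter_subset_right (measure_singleton r))
  rw [← Measure.restrict_congr_set hset]
  exact ((Kf_cont hg1 hr har).mul (Wf_cont.mono diff_subset)).aestronglyMeasurable
    (measurableSet_Ioi.diff (measurableSet_singleton r))

include hs hg1 hg2 in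
lemma habs : IntegrableOn (fun σ => |g σ| / (1 + σ ^ (1+2*s))) (Ioi 0) := by
  apply IntegrableOn.congr_fun hg2.abs _ measurableSet_Ioi
  intro σ hσ
  have h1 : (0:ℝ) < 1 + σ ^ (1+2*s) := by
    have := Real.rpow_pos_of_pos (mem_Ioi.mp hσ) (1+2*s)
    linarith
  simp [abs_div, abs_of_pos h1]

include hs hg1 hg2 in
lemma hloc {R : ℝ} (hR : 0 < R) : IntegrableOn (fun σ => |g σ|) (Ioc 0 R) := by
  apply aux_mono measurableSet_Ioc
    (ψ := fun σ => (1 + R ^ (1+2*s)) * (|g σ| / (1 + σ ^ (1+2*s))))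
    ((((habs hs hg1 hg2)).mono_set Ioc_subset_Ioi_self).const_mul _)
  · exact ((hg1.continuousOn.mono Ioc_subset_Ioi_self).abs).aestronglyMeasurable measurableSet_Ioc
  · intro σ hσ
    obtain ⟨hσ0, hσR⟩ := hσ
    have h1 : (0:ℝ) < 1 + σ ^ (1+2*s) := by
      have := Real.rpow_pos_of_pos hσ0 (1+2*s); linarith
    have h2 : 1 + σ ^ (1+2*s) ≤ 1 + R ^ (1+2*s) := by
      have : σ ^ (1+2*s) ≤ R ^ (1+2*s) :=
        Real.rpow_le_rpow hσ0.le hσR (by linarith [hs.1])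
      linarith
    rw [abs_abs]
    calc |g σ| = (1 + σ ^ (1+2*s)) * (|g σ| / (1 + σ ^ (1+2*s))) := by field_simp
      _ ≤ (1 + R ^ (1+2*s)) * (|g σ| / (1 + σ ^ (1+2*s))) :=
          mul_le_mul_of_nonneg_right h2 (by positivity)

include hs in
lemma tail_const {T : ℝ} (hT : 0 < T) (c0 : ℝ) :
    IntegrableOn (fun τ => c0 * Wf s τ) (Ioi T) :=
  (integrableOn_Ioi_rpow_of_lt (by linarith [hs.1] : -(1+2*s) < -1) hT).const_mul c0

include hs hg1 hg2 hr in
lemma tailT2 : IntegrableOn (fun τ => g (τ+r) * Wf s τ) (Ioi (r/2)) := by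
  have hc : (0:ℝ) < 1+2*s := by linarith [hs.1]
  have hd : ∀ τ ∈ Ioi (r/2), HasDerivWithinAt (fun τ : ℝ => τ + r) (1:ℝ) (Ioi (r/2)) τ :=
    fun τ _ => ((hasDerivAt_id τ).add_const r).hasDerivWithinAt
  have hinj : InjOn (fun τ : ℝ => τ + r) (Ioi (r/2)) := fun a _ b _ h => by simpa using h
  have himg : (fun τ : ℝ => τ + r) '' (Ioi (r/2)) ⊆ Ioi 0 := by
    rintro _ ⟨τ, hτ, rfl⟩
    have := mem_Ioi.mp hτ; simp only [mem_Ioi]; linarith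
  have hcv := aux_cv (φ' := fun _ => (1:ℝ)) measurableSet_Ioi hd hinj
    ((habs hs hg1 hg2).mono_set himg)
  apply aux_mono measurableSet_Ioi (ψ := fun τ => ((r/2) ^ (-(1+2*s)) + 3 ^ (1+2*s)) *
    (|(1:ℝ)| * (|g (τ+r)| / (1+(τ+r)^(1+2*s))))) (hcv.const_mul _)
  · refine (ContinuousOn.mul ?_ (Wf_cont.mono (fun τ hτ => ?_))).aestronglyMeasurable
      measurableSet_Ioi
    · apply hg1.continuousOn.comp (by fun_prop)
      intro τ hτ
      have := mem_Ioi.mp hτ; simp only [mem_Ioi]; linarith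
    · have := mem_Ioi.mp hτ; simp only [mem_Ioi]; linarith
  · intro τ hτ
    have hτ2 : r/2 < τ := mem_Ioi.mp hτ
    have hτ0 : 0 < τ := by linarith
    have hy : (0:ℝ) ≤ τ + r := by linarith
    have h1 : (0:ℝ) < 1 + (τ+r) ^ (1+2*s) := by positivity
    have hw := aux_w hc (by positivity : (0:ℝ) < r/2) hτ2 hy
      (by norm_num : (0:ℝ) ≤ 3) (by linarith : τ + r ≤ 3 * τ)
    calc |g (τ+r) * Wf s τ| = |g (τ+r)| * Wf s τ := by
          rw [abs_mul, abs_of_nonneg (Wf_pos hτ0).le]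
      _ = (|g (τ+r)| / (1+(τ+r)^(1+2*s))) * (Wf s τ * (1+(τ+r)^(1+2*s))) := by
          field_simp
      _ ≤ (|g (τ+r)| / (1+(τ+r)^(1+2*s))) * ((r/2) ^ (-(1+2*s)) + 3 ^ (1+2*s)) := by
          apply mul_le_mul_of_nonneg_left hw (by positivity)
      _ = ((r/2) ^ (-(1+2*s)) + 3 ^ (1+2*s)) * (|(1:ℝ)| * (|g (τ+r)| / (1+(τ+r)^(1+2*s)))) := by
          rw [abs_one, one_mul]; ring

include hs hg1 hg2 hr in
lemma tailT5 : IntegrableOn (fun τ => g (τ-r) * Wf s τ) (Ioi (2*r)) := by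
  have hc : (0:ℝ) < 1+2*s := by linarith [hs.1]
  have hd : ∀ τ ∈ Ioi (2*r), HasDerivWithinAt (fun τ : ℝ => τ - r) (1:ℝ) (Ioi (2*r)) τ :=
    fun τ _ => ((hasDerivAt_id τ).sub_const r).hasDerivWithinAt
  have hinj : InjOn (fun τ : ℝ => τ - r) (Ioi (2*r)) := fun a _ b _ h => by
    have : a - r = b - r := h
    linarith
  have himg : (fun τ : ℝ => τ - r) '' (Ioi (2*r)) ⊆ Ioi 0 := by
    rintro _ ⟨τ, hτ, rfl⟩
    have := mem_Ioi.mp hτ; simp only [mem_Ioi]; linarith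
  have hcv := aux_cv (φ' := fun _ => (1:ℝ)) measurableSet_Ioi hd hinj
    ((habs hs hg1 hg2).mono_set himg)
  apply aux_mono measurableSet_Ioi (ψ := fun τ => ((2*r) ^ (-(1+2*s)) + 1 ^ (1+2*s)) *
    (|(1:ℝ)| * (|g (τ-r)| / (1+(τ-r)^(1+2*s))))) (hcv.const_mul _)
  · refine (ContinuousOn.mul ?_ (Wf_cont.mono (fun τ hτ => ?_))).aestronglyMeasurable
      measurableSet_Ioi
    · apply hg1.continuousOn.comp (by fun_prop)
      intro τ hτ
      have := mem_Ioi.mp hτ; simp only [mem_Ioi]; linarith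
    · have := mem_Ioi.mp hτ; simp only [mem_Ioi]; linarith
  · intro τ hτ
    have hτ2 : 2*r < τ := mem_Ioi.mp hτ
    have hτ0 : 0 < τ := by linarith
    have hy : (0:ℝ) ≤ τ - r := by linarith
    have h1 : (0:ℝ) < 1 + (τ-r) ^ (1+2*s) := by positivity
    have hw := aux_w hc (by positivity : (0:ℝ) < 2*r) hτ2 hy
      (by norm_num : (0:ℝ) ≤ 1) (by linarith : τ - r ≤ 1 * τ)
    calc |g (τ-r) * Wf s τ| = |g (τ-r)| * Wf s τ := by
          rw [abs_mul, abs_of_nonneg (Wf_pos hτ0).le]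
      _ = (|g (τ-r)| / (1+(τ-r)^(1+2*s))) * (Wf s τ * (1+(τ-r)^(1+2*s))) := by
          field_simp
      _ ≤ (|g (τ-r)| / (1+(τ-r)^(1+2*s))) * ((2*r) ^ (-(1+2*s)) + 1 ^ (1+2*s)) := by
          apply mul_le_mul_of_nonneg_left hw (by positivity)
      _ = ((2*r) ^ (-(1+2*s)) + 1 ^ (1+2*s)) * (|(1:ℝ)| * (|g (τ-r)| / (1+(τ-r)^(1+2*s)))) := by
          rw [abs_one, one_mul]; ring

include hs hg1 hg2 hr in
lemma tailT4 : IntegrableOn (fun τ => g (τ-r) * Wf s τ) (Ioc r (2*r)) := by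
  have hd : ∀ τ ∈ Ioc r (2*r), HasDerivWithinAt (fun τ : ℝ => τ - r) (1:ℝ) (Ioc r (2*r)) τ :=
    fun τ _ => ((hasDerivAt_id τ).sub_const r).hasDerivWithinAt
  have hinj : InjOn (fun τ : ℝ => τ - r) (Ioc r (2*r)) := fun a _ b _ h => by
    have : a - r = b - r := h
    linarith
  have himg : (fun τ : ℝ => τ - r) '' (Ioc r (2*r)) ⊆ Ioc 0 r := by
    rintro _ ⟨τ, hτ, rfl⟩
    refine ⟨?_, ?_⟩
    · show 0 < τ - r; linarith [hτ.1]
    · show τ - r ≤ r; linarith [hτ.2]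
  have hcv := aux_cv (φ' := fun _ => (1:ℝ)) measurableSet_Ioc hd hinj
    ((hloc hs hg1 hg2 hr).mono_set himg)
  apply aux_mono measurableSet_Ioc (ψ := fun τ => r ^ (-(1+2*s)) *
    (|(1:ℝ)| * |g (τ-r)|)) (hcv.const_mul _)
  · refine (ContinuousOn.mul ?_ (Wf_cont.mono (fun τ hτ => ?_))).aestronglyMeasurable
      measurableSet_Ioc
    · apply hg1.continuousOn.comp (by fun_prop)
      intro τ hτ
      simp only [mem_Ioi]; linarith [hτ.1]
    · simp only [mem_Ioi]; linarith [hτ.1]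
  · intro τ hτ
    have hτ0 : 0 < τ := hr.trans hτ.1
    have hW : Wf s τ ≤ r ^ (-(1+2*s)) :=
      Real.rpow_le_rpow_of_nonpos hr hτ.1.le (by linarith [hs.1])
    calc |g (τ-r) * Wf s τ| = |g (τ-r)| * Wf s τ := by
          rw [abs_mul, abs_of_nonneg (Wf_pos hτ0).le]
      _ ≤ |g (τ-r)| * r ^ (-(1+2*s)) := mul_le_mul_of_nonneg_left hW (abs_nonneg _)
      _ = r ^ (-(1+2*s)) * (|(1:ℝ)| * |g (τ-r)|) := by rw [abs_one, one_mul]; ring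

include hs hg1 hg2 hr in
lemma tailT3 : IntegrableOn (fun τ => g (r-τ) * Wf s τ) (Ioo (r/2) r) := by
  have hd : ∀ τ ∈ Ioo (r/2) r, HasDerivWithinAt (fun τ : ℝ => r - τ) (-1:ℝ) (Ioo (r/2) r) τ :=
    fun τ _ => ((hasDerivAt_id τ).const_sub r).hasDerivWithinAt
  have hinj : InjOn (fun τ : ℝ => r - τ) (Ioo (r/2) r) := fun a _ b _ h => by
    have : r - a = r - b := h
    linarith
  have himg : (fun τ : ℝ => r - τ) '' (Ioo (r/2) r) ⊆ Ioc 0 (r/2) := by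
    rintro _ ⟨τ, hτ, rfl⟩
    refine ⟨?_, ?_⟩
    · show 0 < r - τ; linarith [hτ.2]
    · show r - τ ≤ r/2; linarith [hτ.1]
  have hcv := aux_cv (φ' := fun _ => (-1:ℝ)) measurableSet_Ioo hd hinj
    ((hloc hs hg1 hg2 (by positivity : (0:ℝ) < r/2)).mono_set himg)
  apply aux_mono measurableSet_Ioo (ψ := fun τ => (r/2) ^ (-(1+2*s)) *
    (|(-1:ℝ)| * |g (r-τ)|)) (hcv.const_mul _)
  · refine (ContinuousOn.mul ?_ (Wf_cont.mono (fun τ hτ => ?_))).aestronglyMeasurable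
      measurableSet_Ioo
    · apply hg1.continuousOn.comp (by fun_prop)
      intro τ hτ
      simp only [mem_Ioi, sub_pos]; exact hτ.2
    · simp only [mem_Ioi]; linarith [hτ.1, hr]
  · intro τ hτ
    have hτ0 : 0 < τ := lt_trans (by positivity) hτ.1
    have hW : Wf s τ ≤ (r/2) ^ (-(1+2*s)) :=
      Real.rpow_le_rpow_of_nonpos (by positivity) hτ.1.le (by linarith [hs.1])
    calc |g (r-τ) * Wf s τ| = |g (r-τ)| * Wf s τ := by
          rw [abs_mul, abs_of_nonneg (Wf_pos hτ0).le]
      _ ≤ |g (r-τ)| * (r/2) ^ (-(1+2*s)) := mul_le_mul_of_nonneg_left hW (abs_nonneg _)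
      _ = (r/2) ^ (-(1+2*s)) * (|(-1:ℝ)| * |g (r-τ)|) := by rw [abs_neg, abs_one, one_mul]; ring

include hs hg1 hg2 hr in
lemma tailT1 : IntegrableOn (fun τ => g (Real.sqrt (r^2+τ^2)) * Wf s τ) (Ioi r) := by
  have hc : (0:ℝ) < 1+2*s := by linarith [hs.1]
  set φ : ℝ → ℝ := fun τ => Real.sqrt (r^2+τ^2) with hφ
  set φ' : ℝ → ℝ := fun τ => τ / Real.sqrt (r^2+τ^2) with hφ'
  have hq0 : ∀ τ : ℝ, (0:ℝ) < r^2+τ^2 := fun τ => by positivity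
  have hφpos : ∀ τ : ℝ, 0 < φ τ := fun τ => Real.sqrt_pos.mpr (hq0 τ)
  have hd : ∀ τ ∈ Ioi r, HasDerivWithinAt φ (φ' τ) (Ioi r) τ := by
    intro τ hτ
    have hin : HasDerivAt (fun τ : ℝ => r^2+τ^2) (2*τ) τ := by
      simpa using (hasDerivAt_pow 2 τ).const_add (r^2)
    have hsq : HasDerivAt Real.sqrt (1/(2*Real.sqrt (r^2+τ^2))) (r^2+τ^2) :=
      Real.hasDerivAt_sqrt (ne_of_gt (hq0 τ))
    have := hsq.comp τ hin
    have heq : 1/(2*Real.sqrt (r^2+τ^2)) * (2*τ) = φ' τ := by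
      rw [hφ']
      have h0 : Real.sqrt (r^2+τ^2) ≠ 0 := ne_of_gt (Real.sqrt_pos.mpr (hq0 τ))
      field_simp
    rw [heq] at this
    exact this.hasDerivWithinAt
  have hinj : InjOn φ (Ioi r) := by
    intro a ha b hb h
    have h2 : r^2+a^2 = r^2+b^2 := by
      rwa [hφ, Real.sqrt_inj (hq0 a).le (hq0 b).le] at h
    have h3 : a^2 = b^2 := by linarith
    have ha0 : 0 ≤ a := by linarith [mem_Ioi.mp ha, hr]
    have hb0 : 0 ≤ b := by linarith [mem_Ioi.mp hb, hr]
    calc a = Real.sqrt (a^2) := (Real.sqrt_sq ha0).symm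
      _ = Real.sqrt (b^2) := by rw [h3]
      _ = b := Real.sqrt_sq hb0
  have himg : φ '' (Ioi r) ⊆ Ioi 0 := by
    rintro _ ⟨τ, _, rfl⟩
    exact mem_Ioi.mpr (hφpos τ)
  have hcv := aux_cv measurableSet_Ioi hd hinj ((habs hs hg1 hg2).mono_set himg)
  have hφle : ∀ τ : ℝ, r < τ → φ τ ≤ Real.sqrt 2 * τ := by
    intro τ hτ
    have hτ0 : 0 < τ := hr.trans hτ
    calc φ τ ≤ Real.sqrt (2*τ^2) := Real.sqrt_le_sqrt (by nlinarith)
      _ = Real.sqrt 2 * τ := by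
          rw [Real.sqrt_mul (by norm_num) (τ^2), Real.sqrt_sq hτ0.le]
  have hφ'lb : ∀ τ : ℝ, r < τ → 1 ≤ Real.sqrt 2 * |φ' τ| := by
    intro τ hτ
    have hτ0 : 0 < τ := hr.trans hτ
    have h1 : 0 < φ' τ := div_pos hτ0 (hφpos τ)
    rw [abs_of_pos h1]
    show 1 ≤ Real.sqrt 2 * (τ / Real.sqrt (r^2+τ^2))
    have h2 : Real.sqrt (r^2+τ^2) ≤ Real.sqrt 2 * τ := hφle τ hτ
    have h3 : 0 < Real.sqrt (r^2+τ^2) := Real.sqrt_pos.mpr (hq0 τ)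
    rw [mul_comm, div_mul_eq_mul_div, le_div_iff₀ h3, one_mul, mul_comm τ (Real.sqrt 2)]
    exact h2
  apply aux_mono measurableSet_Ioi
    (ψ := fun τ => ((r ^ (-(1+2*s)) + (Real.sqrt 2) ^ (1+2*s)) * Real.sqrt 2) *
      (|φ' τ| * (|g (φ τ)| / (1 + (φ τ) ^ (1+2*s))))) (hcv.const_mul _)
  · refine (ContinuousOn.mul ?_ (Wf_cont.mono (fun τ hτ => mem_Ioi.mpr
      (hr.trans (mem_Ioi.mp hτ))))).aestronglyMeasurable measurableSet_Ioi
    apply hg1.continuousOn.comp (by fun_prop)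
    intro τ _
    exact mem_Ioi.mpr (hφpos τ)
  · intro τ hτ
    have hτr : r < τ := mem_Ioi.mp hτ
    have hτ0 : 0 < τ := hr.trans hτr
    have h1 : (0:ℝ) < 1 + (φ τ) ^ (1+2*s) := by positivity
    have hw := aux_w hc hr hτr (hφpos τ).le (Real.sqrt_nonneg 2) (hφle τ hτr)
    have hFnn : (0:ℝ) ≤ |g (φ τ)| / (1 + (φ τ) ^ (1+2*s)) := by positivity
    calc |g (φ τ) * Wf s τ| = |g (φ τ)| * Wf s τ := by
          rw [abs_mul, abs_of_nonneg (Wf_pos hτ0).le]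
      _ = (|g (φ τ)| / (1 + (φ τ) ^ (1+2*s))) * (Wf s τ * (1 + (φ τ) ^ (1+2*s))) := by
          field_simp
      _ ≤ (|g (φ τ)| / (1 + (φ τ) ^ (1+2*s))) * (r ^ (-(1+2*s)) + (Real.sqrt 2) ^ (1+2*s)) :=
          mul_le_mul_of_nonneg_left hw hFnn
      _ ≤ ((Real.sqrt 2 * |φ' τ|) * (|g (φ τ)| / (1 + (φ τ) ^ (1+2*s)))) *
            (r ^ (-(1+2*s)) + (Real.sqrt 2) ^ (1+2*s)) := by
          apply mul_le_mul_of_nonneg_right _ (by positivity)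
          nlinarith [hφ'lb τ hτr, hFnn]
      _ = ((r ^ (-(1+2*s)) + (Real.sqrt 2) ^ (1+2*s)) * Real.sqrt 2) *
            (|φ' τ| * (|g (φ τ)| / (1 + (φ τ) ^ (1+2*s)))) := by ring

include hs in
lemma near0 {δ C : ℝ} (hδ : 0 < δ) (hC : 0 ≤ C) {target : ℝ → ℝ}
    (hm : AEStronglyMeasurable target (volume.restrict (Ioc 0 δ)))
    (hb : ∀ τ ∈ Ioc (0:ℝ) δ, |target τ| ≤ C * τ ^ (2:ℕ) * Wf s τ) :
    IntegrableOn target (Ioc 0 δ) := by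
  apply aux_mono measurableSet_Ioc (ψ := fun τ => C * τ ^ (1-2*s))
    ((intervalIntegral.intervalIntegrable_rpow' (a := 0) (b := δ) (by linarith [hs.2] : (-1:ℝ) < 1-2*s)).1.const_mul C) hm
  intro τ hτ
  have hτ0 : 0 < τ := hτ.1
  have key : (τ:ℝ) ^ (2:ℕ) * Wf s τ = τ ^ (1-2*s) := by
    rw [← Real.rpow_natCast τ 2]
    show τ ^ (2:ℝ) * τ ^ (-(1+2*s)) = τ ^ (1-2*s)
    rw [← Real.rpow_add hτ0]
    congr 1
    ring
  calc |target τ| ≤ C * τ ^ (2:ℕ) * Wf s τ := hb τ hτ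
    _ = C * τ ^ (1-2*s) := by rw [mul_assoc, key]

include hs hg1 hg2 hr in
lemma core_int0 : IntegrableOn (fun τ => Kf g r 0 τ * Wf s τ) (Ioi 0) := by
  have hK0 : ∀ τ : ℝ, Kf g r 0 τ = 2*(gtilde g (r^2+τ^2) - gtilde g (r^2)) := by
    intro τ
    unfold Kf
    rw [show r^2+τ^2+2*τ*0 = r^2+τ^2 from by ring, show r^2+τ^2-2*τ*0 = r^2+τ^2 from by ring]
    ring
  rw [show Ioi (0:ℝ) = Ioc 0 r ∪ Ioi r from (Ioc_union_Ioi_eq_Ioi hr.le).symm]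
  apply IntegrableOn.union
  · obtain ⟨M, hM0, hM⟩ := aux_lip ((hGC2 hg1).of_le one_le_two)
      (α := r^2) (β := 2*r^2) (by positivity)
    apply near0 hs hr (by positivity : (0:ℝ) ≤ 2*M)
    · exact (Kf_aesm hg1 hr (by simp [hr.le] : |(0:ℝ)| ≤ r)).mono_measure
        (Measure.restrict_mono Ioc_subset_Ioi_self le_rfl)
    · intro τ hτ
      obtain ⟨hτ0, hτr⟩ := hτ
      have hmem1 : r^2+τ^2 ∈ Icc (r^2) (2*r^2) := by
        constructor <;> nlinarith
      have hmem2 : (r^2 : ℝ) ∈ Icc (r^2) (2*r^2) := by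
        constructor <;> nlinarith
      have h1 : |gtilde g (r^2+τ^2) - gtilde g (r^2)| ≤ M * τ^2 := by
        have := hM _ hmem1 _ hmem2
        rw [show r^2+τ^2-r^2 = τ^2 from by ring, abs_of_nonneg (sq_nonneg τ)] at this
        exact this
      calc |Kf g r 0 τ * Wf s τ| = |Kf g r 0 τ| * Wf s τ := by
            rw [abs_mul, abs_of_nonneg (Wf_pos hτ0).le]
        _ ≤ (2*(M * τ^2)) * Wf s τ := by
            apply mul_le_mul_of_nonneg_right _ (Wf_pos hτ0).le
            rw [hK0, abs_mul, abs_two]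
            exact mul_le_mul_of_nonneg_left h1 (by norm_num)
        _ = 2*M * τ ^ (2:ℕ) * Wf s τ := by ring
  · have h1 := (tailT1 hs hg1 hg2 hr).const_mul 2
    have h2 := tail_const hs hr (2*gtilde g (r^2))
    apply IntegrableOn.congr_fun (h1.sub h2) _ measurableSet_Ioi
    intro τ hτ
    show 2*(g (Real.sqrt (r^2+τ^2)) * Wf s τ) - (2*gtilde g (r^2)) * Wf s τ
      = Kf g r 0 τ * Wf s τ
    rw [hK0]
    show 2*(gtilde g (r^2+τ^2) * Wf s τ) - (2*gtilde g (r^2)) * Wf s τ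
      = 2*(gtilde g (r^2+τ^2) - gtilde g (r^2)) * Wf s τ
    ring

include hs hg1 hg2 hr in
lemma core_intr : IntegrableOn (fun τ => Kf g r r τ * Wf s τ) (Ioi 0) := by
  have hKr : ∀ τ : ℝ, 0 ≤ τ → Kf g r r τ = g (r+τ) + g |r-τ| - 2*g r := by
    intro τ hτ
    unfold Kf gtilde
    rw [show r^2+τ^2+2*τ*r = (r+τ)^2 from by ring, show r^2+τ^2-2*τ*r = (r-τ)^2 from by ring,
      Real.sqrt_sq (by linarith : (0:ℝ) ≤ r+τ), Real.sqrt_sq_eq_abs, Real.sqrt_sq hr.le]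
  rw [show Ioi (0:ℝ) = Ioc 0 (r/2) ∪ Ioi (r/2) from (Ioc_union_Ioi_eq_Ioi (by positivity)).symm]
  apply IntegrableOn.union
  · obtain ⟨C, hC0, hC⟩ := aux_second hg1 hr
    apply near0 hs (by positivity) hC0
    · exact (Kf_aesm hg1 hr (by rw [abs_of_pos hr] : |r| ≤ r)).mono_measure
        (Measure.restrict_mono Ioc_subset_Ioi_self le_rfl)
    · intro τ hτ
      obtain ⟨hτ0, hτr⟩ := hτ
      have habs : |r - τ| = r - τ := abs_of_nonneg (by linarith)
      have h1 : |Kf g r r τ| ≤ C * τ^2 := by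
        rw [hKr τ hτ0.le, habs]
        exact hC τ ⟨hτ0.le, hτr⟩
      calc |Kf g r r τ * Wf s τ| = |Kf g r r τ| * Wf s τ := by
            rw [abs_mul, abs_of_nonneg (Wf_pos hτ0).le]
        _ ≤ (C * τ^2) * Wf s τ := mul_le_mul_of_nonneg_right h1 (Wf_pos hτ0).le
        _ = C * τ ^ (2:ℕ) * Wf s τ := by ring
  · have P1 := tailT2 hs hg1 hg2 hr
    have P2 : IntegrableOn (fun τ => g |r-τ| * Wf s τ) (Ioi (r/2)) := by
      rw [show Ioi (r/2) = Ioc (r/2) r ∪ Ioi r from (Ioc_union_Ioi_eq_Ioi (by linarith)).symm]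
      apply IntegrableOn.union
      · rw [integrableOn_Ioc_iff_integrableOn_Ioo]
        apply IntegrableOn.congr_fun (tailT3 hs hg1 hg2 hr) _ measurableSet_Ioo
        intro τ hτ
        show g (r-τ) * Wf s τ = g |r-τ| * Wf s τ
        rw [abs_of_nonneg (by linarith [hτ.2] : (0:ℝ) ≤ r-τ)]
      · rw [show Ioi r = Ioc r (2*r) ∪ Ioi (2*r) from (Ioc_union_Ioi_eq_Ioi (by linarith)).symm]
        apply IntegrableOn.union
        · apply IntegrableOn.congr_fun (tailT4 hs hg1 hg2 hr) _ measurableSet_Ioc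
          intro τ hτ
          show g (τ-r) * Wf s τ = g |r-τ| * Wf s τ
          rw [show |r-τ| = τ - r from by rw [abs_sub_comm]; exact abs_of_nonneg (by linarith [hτ.1])]
        · apply IntegrableOn.congr_fun (tailT5 hs hg1 hg2 hr) _ measurableSet_Ioi
          intro τ hτ
          show g (τ-r) * Wf s τ = g |r-τ| * Wf s τ
          rw [show |r-τ| = τ - r from by rw [abs_sub_comm]; exact abs_of_nonneg (by linarith [mem_Ioi.mp hτ, hr])]
    have P3 := tail_const hs (by positivity : (0:ℝ) < r/2) (2*g r)
    apply IntegrableOn.congr_fun ((P1.add P2).sub P3) _ measurableSet_Ioi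
    intro τ hτ
    have hτ0 : 0 ≤ τ := by have := mem_Ioi.mp hτ; linarith
    show g (τ+r) * Wf s τ + g |r-τ| * Wf s τ - (2*g r) * Wf s τ = Kf g r r τ * Wf s τ
    rw [hKr τ hτ0, add_comm τ r]
    ring

lemma ae_ne (r : ℝ) : ∀ᵐ τ : ℝ, τ ≠ r := by
  have h : (volume : Measure ℝ) {r} = 0 := measure_singleton r
  filter_upwards [compl_mem_ae_iff.mpr h] with τ hτ
  simpa using hτ

include hs hg1 hg2 hg3 hr in
lemma core_int {a : ℝ} (har : |a| ≤ r) :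
    IntegrableOn (fun τ => Kf g r a τ * Wf s τ) (Ioi 0) := by
  have h0 := core_int0 hs hg1 hg2 hr
  have hrr := core_intr hs hg1 hg2 hr
  apply Integrable.mono' (h0.abs.add hrr.abs) (Kf_aesm hg1 hr har)
  rw [ae_restrict_iff' measurableSet_Ioi]
  filter_upwards [ae_ne r] with τ hτr hτ
  have hτ0 : 0 < τ := mem_Ioi.mp hτ
  have h0a : Kf g r 0 τ ≤ Kf g r a τ := by
    rw [← Kf_abs g r a]
    exact Kf_mono hg1 hg3 hr le_rfl (abs_nonneg a) har hτ0 hτr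
  have har' : Kf g r a τ ≤ Kf g r r τ := by
    rw [← Kf_abs g r a]
    exact Kf_mono hg1 hg3 hr (abs_nonneg a) har le_rfl hτ0 hτr
  have hWnn : 0 ≤ Wf s τ := (Wf_pos hτ0).le
  have habs : |Kf g r a τ| ≤ |Kf g r 0 τ| + |Kf g r r τ| := by
    rw [abs_le]
    constructor
    · linarith [neg_abs_le (Kf g r 0 τ), le_abs_self (Kf g r r τ), abs_nonneg (Kf g r r τ)]
    · linarith [le_abs_self (Kf g r r τ), abs_nonneg (Kf g r 0 τ)]
  calc ‖Kf g r a τ * Wf s τ‖ = |Kf g r a τ| * Wf s τ := by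
        rw [Real.norm_eq_abs, abs_mul, abs_of_nonneg hWnn]
    _ ≤ (|Kf g r 0 τ| + |Kf g r r τ|) * Wf s τ := mul_le_mul_of_nonneg_right habs hWnn
    _ = |Kf g r 0 τ * Wf s τ| + |Kf g r r τ * Wf s τ| := by
        rw [abs_mul, abs_mul, abs_of_nonneg hWnn]; ring

include hs hg1 hg2 hg3 hr in
lemma core_le {a b : ℝ} (hab : |a| ≤ |b|) (hbr : |b| ≤ r) :
    ∫ τ in Ioi (0:ℝ), Kf g r a τ * Wf s τ ≤ ∫ τ in Ioi (0:ℝ), Kf g r b τ * Wf s τ := by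
  apply integral_mono_ae (core_int hs hg1 hg2 hg3 hr (hab.trans hbr))
    (core_int hs hg1 hg2 hg3 hr hbr)
  rw [Filter.EventuallyLE, ae_restrict_iff' measurableSet_Ioi]
  filter_upwards [ae_ne r] with τ hτr hτ
  have hτ0 : 0 < τ := mem_Ioi.mp hτ
  have : Kf g r a τ ≤ Kf g r b τ := by
    rw [← Kf_abs g r a, ← Kf_abs g r b]
    exact Kf_mono hg1 hg3 hr (abs_nonneg a) hab hbr hτ0 hτr
  exact mul_le_mul_of_nonneg_right this (Wf_pos hτ0).le

end Core

theorem stmt_0 (N : ℕ) (hN : 1 ≤ N) (s Cs : ℝ) (hs : s ∈ Ioo (1/2 : ℝ) 1)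
    (hCs : 0 < Cs) (g : ℝ → ℝ) (hg : HypH1 s g)
    (u : E N → ℝ) (hu : ∀ x, u x = g ‖x‖)
    (x : E N) (hx : x ≠ 0)
    (ξ xp : E N) (hξ : ‖ξ‖ = 1) (hxp : ‖xp‖ = 1) (hperp : (inner ℝ x xp : ℝ) = 0) :
    Iop N s Cs u xp x ≤ Iop N s Cs u ξ x ∧
    Iop N s Cs u ξ x ≤ Iop N s Cs u (‖x‖⁻¹ • x) x ∧
    IkPlus N 1 s Cs u x = Iop N s Cs u (‖x‖⁻¹ • x) x ∧
    IkMinus N 1 s Cs u x = Iop N s Cs u xp x := by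
  obtain ⟨hg1, hg2', hg3, -⟩ := hg
  have hg2 : IntegrableOn (fun τ => g τ / (1 + τ ^ (1+2*s))) (Ioi 0) := hg2'
  set r := ‖x‖ with hrdef
  have hr : 0 < r := norm_pos_iff.mpr hx
  have hu2 : ∀ y : E N, u y = gtilde g (‖y‖^2) := by
    intro y
    rw [hu y]
    unfold gtilde
    rw [Real.sqrt_sq (norm_nonneg y)]
  have hiden : ∀ (ν : E N), ‖ν‖ = 1 → ∀ τ : ℝ,
      u (x + τ • ν) + u (x - τ • ν) - 2*u x = Kf g r (inner ℝ x ν) τ := by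
    intro ν hν τ
    have h1 : ‖x + τ • ν‖^2 = r^2 + τ^2 + 2*τ*(inner ℝ x ν : ℝ) := by
      have h := norm_add_sq_real x (τ • ν)
      rw [real_inner_smul_right, norm_smul, hν, Real.norm_eq_abs] at h
      rw [h, mul_one, sq_abs]
      ring
    have h2 : ‖x - τ • ν‖^2 = r^2 + τ^2 - 2*τ*(inner ℝ x ν : ℝ) := by
      have h := norm_sub_sq_real x (τ • ν)
      rw [real_inner_smul_right, norm_smul, hν, Real.norm_eq_abs] at h
      rw [h, mul_one, sq_abs]
      ring
    rw [hu2, hu2, hu2, h1, h2]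
    unfold Kf
    ring
  have hIop : ∀ ν : E N, ‖ν‖ = 1 →
      Iop N s Cs u ν x = Cs * ∫ τ in Ioi (0:ℝ), Kf g r (inner ℝ x ν) τ * Wf s τ := by
    intro ν hν
    unfold Iop
    congr 1
    have : (fun τ : ℝ => (u (x + τ • ν) + u (x - τ • ν) - 2 * u x) * τ ^ (-(1 + 2*s)))
        = fun τ => Kf g r (inner ℝ x ν) τ * Wf s τ := by
      funext τ
      rw [show u (x + τ • ν) + u (x - τ • ν) - 2 * u x
        = u (x + τ • ν) + u (x - τ • ν) - 2*u x from by ring, hiden ν hν τ]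
      rfl
    rw [this]
  have hxhat_norm : ‖(‖x‖⁻¹ • x : E N)‖ = 1 := by
    rw [norm_smul, norm_inv, norm_norm, inv_mul_cancel₀ (ne_of_gt hr)]
  have hxhat_inner : (inner ℝ x ((‖x‖⁻¹ • x : E N)) : ℝ) = r := by
    rw [real_inner_smul_right, real_inner_self_eq_norm_sq]
    rw [← hrdef, sq]
    field_simp
  have hinner_le : ∀ ν : E N, ‖ν‖ = 1 → |(inner ℝ x ν : ℝ)| ≤ r := by
    intro ν hν
    calc |(inner ℝ x ν : ℝ)| ≤ ‖x‖ * ‖ν‖ := abs_real_inner_le_norm x ν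
      _ = r := by rw [hν, mul_one, ← hrdef]
  have key : ∀ ν : E N, ‖ν‖ = 1 →
      Iop N s Cs u xp x ≤ Iop N s Cs u ν x ∧
      Iop N s Cs u ν x ≤ Iop N s Cs u (‖x‖⁻¹ • x) x := by
    intro ν hν
    have hνa := hinner_le ν hν
    rw [hIop ν hν, hIop xp hxp, hIop _ hxhat_norm, hperp, hxhat_inner]
    constructor
    · apply mul_le_mul_of_nonneg_left _ hCs.le
      exact core_le hs hg1 hg2 hg3 hr (by rw [abs_zero]; exact abs_nonneg _) hνa
    · apply mul_le_mul_of_nonneg_left _ hCs.le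
      exact core_le hs hg1 hg2 hg3 hr (by rw [abs_of_pos hr]; exact hνa)
        (le_of_eq (abs_of_pos hr))
  have ortho_hat : Orthonormal ℝ (fun _ : Fin 1 => (‖x‖⁻¹ • x : E N)) :=
    ⟨fun _ => hxhat_norm, fun i j hij => absurd (Subsingleton.elim i j) hij⟩
  have ortho_xp : Orthonormal ℝ (fun _ : Fin 1 => xp) :=
    ⟨fun _ => hxp, fun i j hij => absurd (Subsingleton.elim i j) hij⟩
  refine ⟨(key ξ hξ).1, (key ξ hξ).2, ?_, ?_⟩
  · unfold IkPlus
    haveI : Nonempty {ξ : Fin 1 → E N // Orthonormal ℝ ξ} := ⟨⟨_, ortho_hat⟩⟩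
    apply le_antisymm
    · apply ciSup_le
      intro ν
      simp only [Fin.sum_univ_one]
      exact (key (ν.1 0) (ν.2.1 0)).2
    · have hb : BddAbove (range fun ξ : {ξ : Fin 1 → E N // Orthonormal ℝ ξ} =>
          ∑ i, Iop N s Cs u (ξ.1 i) x) := by
        refine ⟨Iop N s Cs u (‖x‖⁻¹ • x) x, ?_⟩
        rintro _ ⟨ν, rfl⟩
        simp only [Fin.sum_univ_one]
        exact (key (ν.1 0) (ν.2.1 0)).2
      refine le_trans (le_of_eq ?_) (le_ciSup hb ⟨_, ortho_hat⟩)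
      simp [hrdef]
  · unfold IkMinus
    haveI : Nonempty {ξ : Fin 1 → E N // Orthonormal ℝ ξ} := ⟨⟨_, ortho_xp⟩⟩
    apply le_antisymm
    · have hb : BddBelow (range fun ξ : {ξ : Fin 1 → E N // Orthonormal ℝ ξ} =>
          ∑ i, Iop N s Cs u (ξ.1 i) x) := by
        refine ⟨Iop N s Cs u xp x, ?_⟩
        rintro _ ⟨ν, rfl⟩
        simp only [Fin.sum_univ_one]
        exact (key (ν.1 0) (ν.2.1 0)).1
      refine le_trans (ciInf_le hb ⟨_, ortho_xp⟩) (le_of_eq ?_)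
      simp
    · apply le_ciInf
      intro ν
      simp only [Fin.sum_univ_one]
      exact (key (ν.1 0) (ν.2.1 0)).1
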